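/- Let ξ be an ordering of the Pascal graph, k ≥ 1, and γ ∈ X ∖ X'_ξ a path that passes through a vertex (i,j) with i > 0 and j > 0 and then through (i+1,j+1), such that the edge of γ entering (i+1,j+1) is ξ-minimal. Let n = i+j ≥ k, let γ_{n+1} denote the edge of γ leaving (i,j), and let e denote the other edge with source (i,j). Define r_n as follows, according to whether γ_{n+1} is ξ-maximal or ξ-minimal, whether e is ξ-maximal or ξ-minimal, and whether γ_{n+1} has range (i+1,j) (case LR) or (i,j+1) (case RL): r_n = C(n,j) in cases (max, min, LR) and (max, min, RL); r_n = C(n+1,j+1) in cases (min, min, RL) and (max, max, LR); r_n = C(n+1,j) in cases (min, min, LR) and (max, max, RL); r_n = C(n+1,j) + C(n,j+1) in cases (min, max, LR) and (min, max, RL). Then T_ξ^{r_n}γ and γ agree on their first n edges. Consequently, if x is the path that agrees with γ after level n and is all-ξ-minimal from the root to (i,j), z is the path that agrees with γ after level n and is all-ξ-maximal from the root to (i,j), and m, l ≥ 0 satisfy T_ξ^m x = γ and T_ξ^l γ = z, then d(σ^{r_n} ω_k(γ), ω_k(γ)) ≤ 2^{−min(m,l)}, where d(ω,ω') = 2^{−min{|t|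 : ω_t ≠ ω'_t}} and σ is the left shift on 𝒫_k^ℤ. -/

import Mathlib

/-- Vertex reached after `n` moves: (number of `false` moves, number of `true` moves). -/
def vertexAt (γ : ℕ → Bool) (n : ℕ) : ℕ × ℕ :=
  (((Finset.range n).filter fun i => γ i = false).card,
   ((Finset.range n).filter fun i => γ i = true).card)

def childOf (v : ℕ × ℕ) (m : Bool) : ℕ × ℕ :=
  if m then (v.1, v.2 + 1) else (v.1 + 1, v.2)

def MoveMin (ξ : ℕ × ℕ → Bool) (v : ℕ × ℕ) (m : Bool) : Prop :=
  (childOf v m).1 = 0 ∨ (childOf v m).2 = 0 ∨ m = !ξ (childOf v m)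

def MoveMax (ξ : ℕ × ℕ → Bool) (v : ℕ × ℕ) (m : Bool) : Prop :=
  (childOf v m).1 = 0 ∨ (childOf v m).2 = 0 ∨ m = ξ (childOf v m)

def IsMinEdge (ξ : ℕ × ℕ → Bool) (γ : ℕ → Bool) (i : ℕ) : Prop :=
  MoveMin ξ (vertexAt γ i) (γ i)

def IsMaxEdge (ξ : ℕ × ℕ → Bool) (γ : ℕ → Bool) (i : ℕ) : Prop :=
  MoveMax ξ (vertexAt γ i) (γ i)

def XMin (ξ : ℕ × ℕ → Bool) : Set (ℕ → Bool) := {γ | ∀ i, IsMinEdge ξ γ i}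

def XMax (ξ : ℕ × ℕ → Bool) : Set (ℕ → Bool) := {γ | ∀ i, IsMaxEdge ξ γ i}

def XPrime (ξ : ℕ × ℕ → Bool) : Set (ℕ → Bool) :=
  {γ | ∃ δ ∈ XMin ξ ∪ XMax ξ, ∃ N : ℕ, ∀ n, N ≤ n → γ n = δ n}

/-- The all-ξ-minimal finite path (list of moves) from the root to a vertex. -/
def minPath (ξ : ℕ × ℕ → Bool) : ℕ × ℕ → List Bool
  | (0, 0) => []
  | (x + 1, 0) => minPath ξ (x, 0) ++ [false]
  | (0, y + 1) => minPath ξ (0, y) ++ [true]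
  | (x + 1, y + 1) =>
      if ξ (x + 1, y + 1) then minPath ξ (x, y + 1) ++ [false]
      else minPath ξ (x + 1, y) ++ [true]
  termination_by p => p.1 + p.2

/-- The all-ξ-maximal finite path (list of moves) from the root to a vertex. -/
def maxPath (ξ : ℕ × ℕ → Bool) : ℕ × ℕ → List Bool
  | (0, 0) => []
  | (x + 1, 0) => maxPath ξ (x, 0) ++ [false]
  | (0, y + 1) => maxPath ξ (0, y) ++ [true]
  | (x + 1, y + 1) =>
      if ξ (x + 1, y + 1) then maxPath ξ (x + 1, y) ++ [true]
      else maxPath ξ (x, y + 1) ++ [false]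
  termination_by p => p.1 + p.2

open Classical in
/-- The adic (Vershik) transformation determined by ξ (identity where undefined). -/
noncomputable def adicT (ξ : ℕ × ℕ → Bool) (γ : ℕ → Bool) : ℕ → Bool :=
  if h : ∃ i, ¬ IsMaxEdge ξ γ i then
    let i0 := Nat.find h
    let v := vertexAt γ (i0 + 1)
    let src : ℕ × ℕ := if ξ v then (v.1, v.2 - 1) else (v.1 - 1, v.2)
    fun n =>
      if n < i0 then (minPath ξ src).getD n false
      else if n = i0 then ξ v
      else γ n
  else γ

open Classical in
/-- The inverse adic transformation determined by ξ (identity where undefined). -/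
noncomputable def adicTInv (ξ : ℕ × ℕ → Bool) (γ : ℕ → Bool) : ℕ → Bool :=
  if h : ∃ i, ¬ IsMinEdge ξ γ i then
    let i0 := Nat.find h
    let v := vertexAt γ (i0 + 1)
    let src : ℕ × ℕ := if ξ v then (v.1 - 1, v.2) else (v.1, v.2 - 1)
    fun n =>
      if n < i0 then (maxPath ξ src).getD n false
      else if n = i0 then !ξ v
      else γ n
  else γ

/-- ℤ-iterates of the adic transformation. -/
noncomputable def adicIter (ξ : ℕ × ℕ → Bool) : ℤ → (ℕ → Bool) → (ℕ → Bool)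
  | Int.ofNat n, γ => (adicT ξ)^[n] γ
  | Int.negSucc n, γ => (adicTInv ξ)^[n + 1] γ

/-- The k-coding of the orbit of γ: symbols are the initial segments of length k. -/
noncomputable def omegaCode (ξ : ℕ × ℕ → Bool) (k : ℕ) (γ : ℕ → Bool) : ℤ → List Bool :=
  fun t => (List.range k).map (adicIter ξ t γ)

/-- Ordered list of all initial segments from the root to (x,y), in increasing ξ-order. -/
def segList (ξ : ℕ × ℕ → Bool) : ℕ × ℕ → List (List Bool)
  | (0, 0) => [[]]
  | (x + 1, 0) => (segList ξ (x, 0)).map (· ++ [false])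
  | (0, y + 1) => (segList ξ (0, y)).map (· ++ [true])
  | (x + 1, y + 1) =>
      if ξ (x + 1, y + 1) then
        (segList ξ (x, y + 1)).map (· ++ [false]) ++ (segList ξ (x + 1, y)).map (· ++ [true])
      else
        (segList ξ (x + 1, y)).map (· ++ [true]) ++ (segList ξ (x, y + 1)).map (· ++ [false])
  termination_by p => p.1 + p.2

/-- Level-k coded basic block at a vertex (x,y) with x+y ≥ k, a word over the
alphabet of initial segments of length k. -/
def codedBlock (ξ : ℕ × ℕ → Bool) (k : ℕ) : ℕ × ℕ → List (List Bool)
  | (0, 0) => segList ξ (0, 0)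
  | (x + 1, 0) => if x + 1 ≤ k then segList ξ (x + 1, 0) else [List.replicate k false]
  | (0, y + 1) => if y + 1 ≤ k then segList ξ (0, y + 1) else [List.replicate k true]
  | (x + 1, y + 1) =>
      if x + 1 + (y + 1) ≤ k then segList ξ (x + 1, y + 1)
      else if ξ (x + 1, y + 1) then codedBlock ξ k (x, y + 1) ++ codedBlock ξ k (x + 1, y)
      else codedBlock ξ k (x + 1, y) ++ codedBlock ξ k (x, y + 1)
  termination_by p => p.1 + p.2

/-- Basic block over the alphabet {a,b}, with a = `false` and b = `true`. -/
def basicBlock (ξ : ℕ × ℕ → Bool) : ℕ × ℕ → List Bool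
  | (0, 0) => []
  | (_ + 1, 0) => [false]
  | (0, _ + 1) => [true]
  | (x + 1, y + 1) =>
      if ξ (x + 1, y + 1) then basicBlock ξ (x, y + 1) ++ basicBlock ξ (x + 1, y)
      else basicBlock ξ (x + 1, y) ++ basicBlock ξ (x, y + 1)
  termination_by p => p.1 + p.2

/-- The finite word ω_s ω_{s+1} ... ω_{t-1}. -/
def wordAt (ω : ℤ → List Bool) (s t : ℤ) : List (List Bool) :=
  (List.range (t - s).toNat).map fun u => ω (s + u)

/-- A ξ-consistent factoring scheme for ω ∈ 𝒫_k^ℤ: `cuts j` is the set of starting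
positions of the blocks of the level-(k+j) factorization, and `vert j s` is the
vertex whose coded basic block is the block starting at the cut `s`. -/
def IsConsistentScheme (ξ : ℕ × ℕ → Bool) (k : ℕ) (ω : ℤ → List Bool)
    (cuts : ℕ → Set ℤ) (vert : ℕ → ℤ → ℕ × ℕ) : Prop :=
  (∀ j : ℕ, ∀ M : ℤ, ∃ s ∈ cuts j, s < M) ∧
  (∀ j : ℕ, ∀ M : ℤ, ∃ t ∈ cuts j, M < t) ∧
  (∀ j : ℕ, ∀ s ∈ cuts j, ∀ t ∈ cuts j, s < t → (∀ u ∈ cuts j, ¬(s < u ∧ u < t)) →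
      (vert j s).1 + (vert j s).2 = k + j ∧
      wordAt ω s t = codedBlock ξ k (vert j s)) ∧
  (∀ j : ℕ, cuts (j + 1) ⊆ cuts j) ∧
  (∀ j : ℕ, ∀ s ∈ cuts (j + 1), ∀ t ∈ cuts (j + 1), s < t →
      (∀ u ∈ cuts (j + 1), ¬(s < u ∧ u < t)) →
      ∀ x y : ℕ, vert (j + 1) s = (x + 1, y + 1) →
        ∃ m ∈ cuts j, s < m ∧ m < t ∧ (∀ u ∈ cuts j, s < u → u < t → u = m) ∧
          (if ξ (x + 1, y + 1)
            then vert j s = (x, y + 1) ∧ vert j m = (x + 1, y)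
            else vert j s = (x + 1, y) ∧ vert j m = (x, y + 1)))

/-- The natural factoring scheme of the k-coding of γ: a level-(k+j) block begins at
coordinate t exactly when T^t γ begins with an all-ξ-minimal path to its level-(k+j) vertex. -/
noncomputable def natCuts (ξ : ℕ × ℕ → Bool) (k : ℕ) (γ : ℕ → Bool) : ℕ → Set ℤ :=
  fun j => {t | ∀ i < k + j, IsMinEdge ξ (adicIter ξ t γ) i}

noncomputable def natVert (ξ : ℕ × ℕ → Bool) (k : ℕ) (γ : ℕ → Bool) : ℕ → ℤ → ℕ × ℕ :=
  fun j t => vertexAt (adicIter ξ t γ) (k + j)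

open Classical in
/-- The return time r_n of the Kink Lemma, where `g` is the move of γ leaving (i,j). -/
noncomputable def kinkReturn (ξ : ℕ × ℕ → Bool) (i j : ℕ) (g : Bool) : ℕ :=
  let n := i + j
  if MoveMax ξ (i, j) g ∧ MoveMin ξ (i, j) (!g) then n.choose j
  else if (MoveMin ξ (i, j) g ∧ MoveMin ξ (i, j) (!g) ∧ g = true) ∨
          (MoveMax ξ (i, j) g ∧ MoveMax ξ (i, j) (!g) ∧ g = false) then (n + 1).choose (j + 1)
  else if (MoveMin ξ (i, j) g ∧ MoveMin ξ (i, j) (!g) ∧ g = false) ∨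
          (MoveMax ξ (i, j) g ∧ MoveMax ξ (i, j) (!g) ∧ g = true) then (n + 1).choose j
  else (n + 1).choose j + n.choose (j + 1)

/-- Convert a length-k list of moves to a function `Fin k → Bool`. -/
def segFn (k : ℕ) (w : List Bool) : Fin k → Bool := fun idx => w.getD idx false

/-- The subshift Σ_k of the k-codings: sequences all of whose finite subblocks occur
in some level-k coded basic block. -/
def SigmaK (ξ : ℕ × ℕ → Bool) (k : ℕ) : Set (ℤ → (Fin k → Bool)) :=
  {ω | ∀ (s : ℤ) (l : ℕ), ∃ p : ℕ × ℕ,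
    ((List.range l).map fun u => ω (s + u)) <:+: (codedBlock ξ k p).map (segFn k)}

/-- The subshift Σ_ξ ⊆ {a,b}^ℤ of sequences all of whose finite subblocks occur in
some basic block B_ξ(x,y). -/
def SigmaXi (ξ : ℕ × ℕ → Bool) : Set (ℤ → Bool) :=
  {ω | ∀ (s : ℤ) (l : ℕ), ∃ p : ℕ × ℕ,
    ((List.range l).map fun u => ω (s + u)) <:+: basicBlock ξ p}

/-- The big subshift Σ: sequences all of whose finite subblocks occur in some basic
block B_ξ(x,y) for some ordering ξ. -/
def BigShift : Set (ℤ → Bool) :=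
  {ω | ∀ (s : ℤ) (l : ℕ), ∃ (ξ : ℕ × ℕ → Bool) (p : ℕ × ℕ),
    ((List.range l).map fun u => ω (s + u)) <:+: basicBlock ξ p}

namespace Stmt8

/-! ### prefix lists -/

def pref (γ : ℕ → Bool) (N : ℕ) : List Bool := (List.range N).map γ

@[simp] lemma pref_zero (γ : ℕ → Bool) : pref γ 0 = [] := rfl

lemma pref_succ (γ : ℕ → Bool) (N : ℕ) : pref γ (N + 1) = pref γ N ++ [γ N] := by
  simp [pref, List.range_succ]

@[simp] lemma pref_length (γ : ℕ → Bool) (N : ℕ) : (pref γ N).length = N := by simp [pref]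

lemma pref_getD (γ : ℕ → Bool) {N idx : ℕ} (h : idx < N) :
    (pref γ N).getD idx false = γ idx := by
  rw [List.getD_eq_getElem _ _ (by simpa using h)]
  simp [pref]

lemma pref_congr {γ₁ γ₂ : ℕ → Bool} {N : ℕ} (h : ∀ idx < N, γ₁ idx = γ₂ idx) :
    pref γ₁ N = pref γ₂ N := by
  unfold pref
  apply List.map_congr_left
  intro a ha
  exact h a (List.mem_range.mp ha)

lemma eq_of_pref_eq {γ₁ γ₂ : ℕ → Bool} {N idx : ℕ} (h : pref γ₁ N = pref γ₂ N)
    (hidx : idx < N) : γ₁ idx = γ₂ idx := by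
  rw [← pref_getD γ₁ hidx, ← pref_getD γ₂ hidx, h]

/-! ### vertexAt -/

lemma vertexAt_zero (γ : ℕ → Bool) : vertexAt γ 0 = (0, 0) := by
  simp [vertexAt]

lemma vertexAt_succ (γ : ℕ → Bool) (N : ℕ) :
    vertexAt γ (N + 1) = childOf (vertexAt γ N) (γ N) := by
  unfold vertexAt childOf
  rw [Finset.range_add_one, Finset.filter_insert, Finset.filter_insert]
  cases h : γ N <;>
    simp [h, Finset.card_insert_of_notMem, Finset.notMem_range_self]

lemma vertexAt_counts (γ : ℕ → Bool) (N : ℕ) :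
    vertexAt γ N = ((pref γ N).count false, (pref γ N).count true) := by
  induction N with
  | zero => simp [vertexAt_zero]
  | succ N ih =>
      rw [vertexAt_succ, ih, pref_succ]
      cases h : γ N <;> simp [childOf, List.count_append, h]

lemma vertexAt_congr {γ₁ γ₂ : ℕ → Bool} {N : ℕ} (h : pref γ₁ N = pref γ₂ N) :
    vertexAt γ₁ N = vertexAt γ₂ N := by
  rw [vertexAt_counts, vertexAt_counts, h]

lemma vertexAt_sum (γ : ℕ → Bool) (N : ℕ) :
    (vertexAt γ N).1 + (vertexAt γ N).2 = N := by
  induction N with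
  | zero => simp [vertexAt_zero]
  | succ N ih =>
      rw [vertexAt_succ]
      cases γ N <;> simp [childOf] <;> omega

/-! ### childOf / predV -/

def predV (v : ℕ × ℕ) (b : Bool) : ℕ × ℕ := if b then (v.1, v.2 - 1) else (v.1 - 1, v.2)

@[simp] lemma predV_childOf (u : ℕ × ℕ) (b : Bool) : predV (childOf u b) b = u := by
  cases b <;> simp [childOf, predV]

lemma childOf_predV_true {v : ℕ × ℕ} (h : 0 < v.2) : childOf (predV v true) true = v := by
  obtain ⟨a, b⟩ := v
  simp [childOf, predV] at h ⊢; omega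

lemma childOf_predV_false {v : ℕ × ℕ} (h : 0 < v.1) : childOf (predV v false) false = v := by
  obtain ⟨a, b⟩ := v
  simp [childOf, predV] at h ⊢; omega

lemma childOf_true_eq {u : ℕ × ℕ} {x y : ℕ} (h : childOf u true = (x + 1, y + 1)) :
    u = (x + 1, y) := by
  obtain ⟨a, b⟩ := u
  simp [childOf, Prod.ext_iff] at h ⊢; omega

lemma childOf_false_eq {u : ℕ × ℕ} {x y : ℕ} (h : childOf u false = (x + 1, y + 1)) :
    u = (x, y + 1) := by
  obtain ⟨a, b⟩ := u
  simp [childOf, Prod.ext_iff] at h ⊢; omega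

end Stmt8
namespace Stmt8

/-! ### segList structure -/

variable {ξ : ℕ × ℕ → Bool}

@[simp] lemma predV_true (a b : ℕ) : predV (a, b) true = (a, b - 1) := by simp [predV]

@[simp] lemma predV_false (a b : ℕ) : predV (a, b) false = (a - 1, b) := by simp [predV]

lemma segList_zero : segList ξ (0, 0) = [[]] := by simp only [segList]

lemma segList_x0 (x : ℕ) : segList ξ (x + 1, 0) = (segList ξ (x, 0)).map (· ++ [false]) := by
  simp only [segList]

lemma segList_0y (y : ℕ) : segList ξ (0, y + 1) = (segList ξ (0, y)).map (· ++ [true]) := by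
  simp only [segList]

lemma segList_interior (x y : ℕ) :
    segList ξ (x + 1, y + 1) =
      (segList ξ (predV (x + 1, y + 1) (!ξ (x + 1, y + 1)))).map (· ++ [!ξ (x + 1, y + 1)]) ++
      (segList ξ (predV (x + 1, y + 1) (ξ (x + 1, y + 1)))).map (· ++ [ξ (x + 1, y + 1)]) := by
  cases h : ξ (x + 1, y + 1) <;>
    simp only [segList, h, if_true, if_false, Bool.not_true, Bool.not_false,
      predV_true, predV_false, Nat.add_sub_cancel, Bool.false_eq_true, Bool.true_eq_false, reduceIte]

lemma length_segList : ∀ (n : ℕ) (p : ℕ × ℕ), p.1 + p.2 = n →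
    (segList ξ p).length = (p.1 + p.2).choose p.2 := by
  intro n
  induction n using Nat.strong_induction_on with
  | _ n ih =>
    rintro ⟨x, y⟩ hn
    match x, y with
    | 0, 0 => rw [segList_zero]; simp
    | x + 1, 0 =>
        rw [segList_x0, List.length_map, ih (x + 0) (by simp at hn ⊢; omega) (x, 0) rfl]
        simp
    | 0, y + 1 =>
        rw [segList_0y, List.length_map, ih (0 + y) (by simp at hn ⊢; omega) (0, y) rfl]
        simp
    | x + 1, y + 1 =>
        simp only at hn
        have h1 := ih (x + (y + 1)) (by omega) (x, y + 1) rfl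
        have h2 := ih ((x + 1) + y) (by omega) (x + 1, y) rfl
        simp only at h1 h2
        rw [segList_interior]
        have hc : (x + 1 + (y + 1)).choose (y + 1)
            = (x + (y + 1)).choose (y + 1) + (x + 1 + y).choose y := by
          rw [show x + 1 + (y + 1) = (x + y + 1) + 1 by omega, Nat.choose_succ_succ,
            show x + (y + 1) = x + y + 1 by omega, show x + 1 + y = x + y + 1 by omega]
          simp only [Nat.succ_eq_add_one]
          omega
        cases h : ξ (x + 1, y + 1) <;>
          simp only [h, Bool.not_true, Bool.not_false, predV_true, predV_false,
            Nat.add_sub_cancel, List.length_append, List.length_map, h1, h2] <;>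
          omega

lemma length_segList' (p : ℕ × ℕ) : (segList ξ p).length = (p.1 + p.2).choose p.2 :=
  length_segList (p.1 + p.2) p rfl

lemma segList_length_pos (p : ℕ × ℕ) : 0 < (segList ξ p).length := by
  rw [length_segList']
  exact Nat.choose_pos (by omega)

end Stmt8
namespace Stmt8

variable {ξ : ℕ × ℕ → Bool}

/-! ### getD helpers -/

lemma getD_map_concat {L : List (List Bool)} {b : Bool} {s : ℕ} (h : s < L.length) :
    (L.map (· ++ [b])).getD s [] = L.getD s [] ++ [b] := by
  rw [List.getD_eq_getElem _ _ (by simpa using h), List.getD_eq_getElem _ _ h,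
    List.getElem_map]

lemma getD_mem {L : List (List Bool)} {s : ℕ} (h : s < L.length) : L.getD s [] ∈ L := by
  rw [List.getD_eq_getElem _ _ h]
  exact L.getElem_mem _

/-! ### counts of elements of segList -/

lemma count_of_mem_segList : ∀ (n : ℕ) (p : ℕ × ℕ), p.1 + p.2 = n → ∀ w ∈ segList ξ p,
    w.count false = p.1 ∧ w.count true = p.2 ∧ w.length = p.1 + p.2 := by
  intro n
  induction n using Nat.strong_induction_on with
  | _ n ih =>
    rintro ⟨x, y⟩ hn w hw
    simp only at hn
    match x, y with
    | 0, 0 =>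
        rw [segList_zero] at hw
        simp only [List.mem_singleton] at hw
        subst hw; simp
    | x + 1, 0 =>
        rw [segList_x0] at hw
        obtain ⟨w', hw', rfl⟩ := List.mem_map.mp hw
        obtain ⟨c1, c2, c3⟩ := ih (x + 0) (by omega) (x, 0) rfl w' hw'
        simp only at c1 c2 c3
        refine ⟨?_, ?_, ?_⟩ <;> simp [List.count_append, c1, c2, c3] <;> omega
    | 0, y + 1 =>
        rw [segList_0y] at hw
        obtain ⟨w', hw', rfl⟩ := List.mem_map.mp hw
        obtain ⟨c1, c2, c3⟩ := ih (0 + y) (by omega) (0, y) rfl w' hw'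
        simp only at c1 c2 c3
        refine ⟨?_, ?_, ?_⟩ <;> simp [List.count_append, c1, c2, c3] <;> omega
    | x + 1, y + 1 =>
        rw [segList_interior] at hw
        have hex : ∃ b w', w' ∈ segList ξ (predV (x + 1, y + 1) b) ∧ w = w' ++ [b] := by
          rcases List.mem_append.mp hw with h' | h' <;>
            · obtain ⟨w', hw', rfl⟩ := List.mem_map.mp h'
              exact ⟨_, w', hw', rfl⟩
        obtain ⟨b, w', hw', rfl⟩ := hex
        cases b
        · obtain ⟨c1, c2, c3⟩ := ih (x + (y + 1)) (by omega) (x, y + 1) rfl w'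
            (by simpa using hw')
          simp only at c1 c2 c3
          refine ⟨?_, ?_, ?_⟩ <;> simp [List.count_append, c1, c2, c3] <;> omega
        · obtain ⟨c1, c2, c3⟩ := ih ((x + 1) + y) (by omega) (x + 1, y) rfl w'
            (by simpa using hw')
          simp only at c1 c2 c3
          refine ⟨?_, ?_, ?_⟩ <;> simp [List.count_append, c1, c2, c3] <;> omega

lemma count_of_mem_segList' {p : ℕ × ℕ} {w : List Bool} (hw : w ∈ segList ξ p) :
    w.count false = p.1 ∧ w.count true = p.2 ∧ w.length = p.1 + p.2 :=
  count_of_mem_segList (p.1 + p.2) p rfl w hw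

lemma vertexAt_of_pref_mem {p : ℕ × ℕ} {γ : ℕ → Bool} (h : pref γ (p.1 + p.2) ∈ segList ξ p) :
    vertexAt γ (p.1 + p.2) = p := by
  obtain ⟨c1, c2, _⟩ := count_of_mem_segList' h
  rw [vertexAt_counts, c1, c2]

/-! ### membership of prefixes -/

lemma pref_mem (γ : ℕ → Bool) (N : ℕ) : pref γ N ∈ segList ξ (vertexAt γ N) := by
  induction N with
  | zero => rw [vertexAt_zero, segList_zero]; simp
  | succ N ih =>
      rw [pref_succ, vertexAt_succ]
      rcases hu : vertexAt γ N with ⟨a, b⟩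
      rw [hu] at ih
      cases hg : γ N
      · simp only [childOf, Bool.false_eq_true, if_neg, reduceIte]
        match b with
        | 0 => rw [segList_x0]; exact List.mem_map_of_mem ih
        | b' + 1 =>
            rw [segList_interior]
            apply List.mem_append.mpr
            cases hξ : ξ (a + 1, b' + 1)
            · right
              simp only [hξ, predV_false, Nat.add_sub_cancel]
              exact List.mem_map_of_mem ih
            · left
              simp only [hξ, Bool.not_true, predV_false, Nat.add_sub_cancel]
              exact List.mem_map_of_mem ih
      · simp only [childOf, reduceIte]
        match a with
        | 0 => rw [segList_0y]; exact List.mem_map_of_mem ih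
        | a' + 1 =>
            rw [segList_interior]
            apply List.mem_append.mpr
            cases hξ : ξ (a' + 1, b + 1)
            · left
              simp only [hξ, Bool.not_false, predV_true, Nat.add_sub_cancel]
              exact List.mem_map_of_mem ih
            · right
              simp only [hξ, predV_true, Nat.add_sub_cancel]
              exact List.mem_map_of_mem ih

end Stmt8
namespace Stmt8

variable {ξ : ℕ × ℕ → Bool}

/-! ### minPath / maxPath -/

lemma minPath_zero : minPath ξ (0, 0) = [] := by simp only [minPath]

lemma maxPath_zero : maxPath ξ (0, 0) = [] := by simp only [maxPath]

lemma minPath_x0 (x : ℕ) : minPath ξ (x + 1, 0) = minPath ξ (x, 0) ++ [false] := by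
  simp only [minPath]

lemma minPath_0y (y : ℕ) : minPath ξ (0, y + 1) = minPath ξ (0, y) ++ [true] := by
  simp only [minPath]

lemma maxPath_x0 (x : ℕ) : maxPath ξ (x + 1, 0) = maxPath ξ (x, 0) ++ [false] := by
  simp only [maxPath]

lemma maxPath_0y (y : ℕ) : maxPath ξ (0, y + 1) = maxPath ξ (0, y) ++ [true] := by
  simp only [maxPath]

lemma minPath_interior (x y : ℕ) :
    minPath ξ (x + 1, y + 1) =
      minPath ξ (predV (x + 1, y + 1) (!ξ (x + 1, y + 1))) ++ [!ξ (x + 1, y + 1)] := by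
  cases h : ξ (x + 1, y + 1) <;>
    simp only [minPath, h, if_true, if_false, Bool.not_true, Bool.not_false,
      predV_true, predV_false, Nat.add_sub_cancel, Bool.false_eq_true, reduceIte]

lemma maxPath_interior (x y : ℕ) :
    maxPath ξ (x + 1, y + 1) =
      maxPath ξ (predV (x + 1, y + 1) (ξ (x + 1, y + 1))) ++ [ξ (x + 1, y + 1)] := by
  cases h : ξ (x + 1, y + 1) <;>
    simp only [maxPath, h, if_true, if_false, Bool.not_true, Bool.not_false,
      predV_true, predV_false, Nat.add_sub_cancel, Bool.false_eq_true, reduceIte]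

lemma segList_getD_zero : ∀ (n : ℕ) (p : ℕ × ℕ), p.1 + p.2 = n →
    (segList ξ p).getD 0 [] = minPath ξ p := by
  intro n
  induction n using Nat.strong_induction_on with
  | _ n ih =>
    rintro ⟨x, y⟩ hn
    simp only at hn
    match x, y with
    | 0, 0 => rw [segList_zero, minPath_zero]; rfl
    | x + 1, 0 =>
        rw [segList_x0, getD_map_concat (segList_length_pos (x, 0)),
          ih (x + 0) (by omega) (x, 0) rfl, minPath_x0]
    | 0, y + 1 =>
        rw [segList_0y, getD_map_concat (segList_length_pos (0, y)),
          ih (0 + y) (by omega) (0, y) rfl, minPath_0y]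
    | x + 1, y + 1 =>
        rw [segList_interior, minPath_interior]
        rw [List.getD_append _ _ _ _ (by
          simp only [List.length_map]
          exact segList_length_pos _)]
        rw [getD_map_concat (segList_length_pos _)]
        congr 1
        rcases hb : !ξ (x + 1, y + 1) with _ | _
        · exact ih (x + (y + 1)) (by omega) _ (by simp)
        · exact ih ((x + 1) + y) (by omega) _ (by simp)

lemma segList_getD_last : ∀ (n : ℕ) (p : ℕ × ℕ), p.1 + p.2 = n →
    (segList ξ p).getD ((segList ξ p).length - 1) [] = maxPath ξ p := by
  intro n
  induction n using Nat.strong_induction_on with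
  | _ n ih =>
    rintro ⟨x, y⟩ hn
    simp only at hn
    match x, y with
    | 0, 0 => rw [segList_zero, maxPath_zero]; rfl
    | x + 1, 0 =>
        rw [segList_x0]
        simp only [List.length_map]
        rw [getD_map_concat (by have := segList_length_pos (ξ := ξ) (x, 0); omega),
          ih (x + 0) (by omega) (x, 0) rfl, maxPath_x0]
    | 0, y + 1 =>
        rw [segList_0y]
        simp only [List.length_map]
        rw [getD_map_concat (by have := segList_length_pos (ξ := ξ) (0, y); omega),
          ih (0 + y) (by omega) (0, y) rfl, maxPath_0y]
    | x + 1, y + 1 =>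
        rw [segList_interior, maxPath_interior]
        have h1 := segList_length_pos (ξ := ξ) (predV (x + 1, y + 1) (!ξ (x + 1, y + 1)))
        have h2 := segList_length_pos (ξ := ξ) (predV (x + 1, y + 1) (ξ (x + 1, y + 1)))
        rw [List.getD_append_right _ _ _ _ (by
          simp only [List.length_append, List.length_map]; omega)]
        simp only [List.length_append, List.length_map]
        have harith : (segList ξ (predV (x + 1, y + 1) (!ξ (x + 1, y + 1)))).length +
            (segList ξ (predV (x + 1, y + 1) (ξ (x + 1, y + 1)))).length - 1 -
            (segList ξ (predV (x + 1, y + 1) (!ξ (x + 1, y + 1)))).length =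
            (segList ξ (predV (x + 1, y + 1) (ξ (x + 1, y + 1)))).length - 1 := by omega
        rw [harith, getD_map_concat (by omega)]
        congr 1
        rcases hb : ξ (x + 1, y + 1) with _ | _
        · exact ih (x + (y + 1)) (by omega) _ (by simp)
        · exact ih ((x + 1) + y) (by omega) _ (by simp)

lemma segList_getD_zero' (p : ℕ × ℕ) : (segList ξ p).getD 0 [] = minPath ξ p :=
  segList_getD_zero (p.1 + p.2) p rfl

lemma segList_getD_last' (p : ℕ × ℕ) :
    (segList ξ p).getD ((segList ξ p).length - 1) [] = maxPath ξ p :=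
  segList_getD_last (p.1 + p.2) p rfl

lemma minPath_mem (p : ℕ × ℕ) : minPath ξ p ∈ segList ξ p := by
  rw [← segList_getD_zero']
  exact getD_mem (segList_length_pos p)

lemma maxPath_mem (p : ℕ × ℕ) : maxPath ξ p ∈ segList ξ p := by
  rw [← segList_getD_last']
  exact getD_mem (by have := segList_length_pos (ξ := ξ) p; omega)

lemma minPath_counts (p : ℕ × ℕ) :
    (minPath ξ p).count false = p.1 ∧ (minPath ξ p).count true = p.2 ∧
      (minPath ξ p).length = p.1 + p.2 :=
  count_of_mem_segList' (minPath_mem p)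

lemma maxPath_counts (p : ℕ × ℕ) :
    (maxPath ξ p).count false = p.1 ∧ (maxPath ξ p).count true = p.2 ∧
      (maxPath ξ p).length = p.1 + p.2 :=
  count_of_mem_segList' (maxPath_mem p)

end Stmt8
namespace Stmt8

variable {ξ : ℕ × ℕ → Bool}

/-! ### all-min / all-max prefixes -/

lemma all_min_pref {γ : ℕ → Bool} {N : ℕ} (h : ∀ i < N, IsMinEdge ξ γ i) :
    pref γ N = minPath ξ (vertexAt γ N) := by
  induction N with
  | zero => rw [vertexAt_zero, minPath_zero, pref_zero]
  | succ N ih =>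
      rw [pref_succ, vertexAt_succ, ih (fun i hi => h i (by omega))]
      have hmin := h N (by omega)
      unfold IsMinEdge MoveMin at hmin
      rcases hu : vertexAt γ N with ⟨a, b⟩
      simp only [hu] at hmin ⊢
      cases hg : γ N <;> rw [hg] at hmin <;>
        simp only [childOf, Bool.false_eq_true, if_false, reduceIte] at hmin ⊢
      · match b with
        | 0 => rw [minPath_x0]
        | b' + 1 =>
            rw [minPath_interior]
            have : ξ (a + 1, b' + 1) = true := by
              rcases hmin with h' | h' | h'
              · omega
              · omega
              · simpa using h'.symm
            rw [this]
            simp [predV]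
      · match a with
        | 0 => rw [minPath_0y]
        | a' + 1 =>
            rw [minPath_interior]
            have : ξ (a' + 1, b + 1) = false := by
              rcases hmin with h' | h' | h'
              · omega
              · omega
              · simpa using h'.symm
            rw [this]
            simp [predV]

lemma all_max_pref {γ : ℕ → Bool} {N : ℕ} (h : ∀ i < N, IsMaxEdge ξ γ i) :
    pref γ N = maxPath ξ (vertexAt γ N) := by
  induction N with
  | zero => rw [vertexAt_zero, maxPath_zero, pref_zero]
  | succ N ih =>
      rw [pref_succ, vertexAt_succ, ih (fun i hi => h i (by omega))]
      have hmax := h N (by omega)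
      unfold IsMaxEdge MoveMax at hmax
      rcases hu : vertexAt γ N with ⟨a, b⟩
      simp only [hu] at hmax ⊢
      cases hg : γ N <;> rw [hg] at hmax <;>
        simp only [childOf, Bool.false_eq_true, if_false, reduceIte] at hmax ⊢
      · match b with
        | 0 => rw [maxPath_x0]
        | b' + 1 =>
            rw [maxPath_interior]
            have : ξ (a + 1, b' + 1) = false := by
              rcases hmax with h' | h' | h'
              · omega
              · omega
              · simpa using h'.symm
            rw [this]
            simp [predV]
      · match a with
        | 0 => rw [maxPath_0y]
        | a' + 1 =>
            rw [maxPath_interior]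
            have : ξ (a' + 1, b + 1) = true := by
              rcases hmax with h' | h' | h'
              · omega
              · omega
              · simpa using h'.symm
            rw [this]
            simp [predV]

lemma pref_min_all {γ : ℕ → Bool} : ∀ {N : ℕ}, pref γ N = minPath ξ (vertexAt γ N) →
    ∀ i < N, IsMinEdge ξ γ i := by
  intro N
  induction N with
  | zero => intro _ i hi; omega
  | succ N ih =>
      intro h i hi
      rw [pref_succ, vertexAt_succ] at h
      rcases hu : vertexAt γ N with ⟨a, b⟩
      rw [hu] at h
      cases hg : γ N <;> rw [hg] at h <;>
        simp only [childOf, Bool.false_eq_true, if_false, reduceIte] at h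
      · -- child = (a+1, b)
        match b with
        | 0 =>
            rw [minPath_x0] at h
            obtain ⟨h1, _⟩ := List.append_inj' h rfl
            rcases Nat.lt_succ_iff_lt_or_eq.mp hi with hi' | rfl
            · exact ih (by rw [h1, hu]) i hi'
            · unfold IsMinEdge MoveMin
              rw [hu, hg]
              simp [childOf]
        | b' + 1 =>
            rw [minPath_interior] at h
            obtain ⟨h1, h2⟩ := List.append_inj' h rfl
            have hξ : ξ (a + 1, b' + 1) = true := by
              cases hξ : ξ (a + 1, b' + 1)
              · rw [hξ] at h2; simp at h2
              · rfl
            rw [hξ] at h1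
            simp only [Bool.not_true, predV_false, Nat.add_sub_cancel] at h1
            rcases Nat.lt_succ_iff_lt_or_eq.mp hi with hi' | rfl
            · exact ih (by rw [h1, hu]) i hi'
            · unfold IsMinEdge MoveMin
              rw [hu, hg]
              simp [childOf, hξ]
      · match a with
        | 0 =>
            rw [minPath_0y] at h
            obtain ⟨h1, _⟩ := List.append_inj' h rfl
            rcases Nat.lt_succ_iff_lt_or_eq.mp hi with hi' | rfl
            · exact ih (by rw [h1, hu]) i hi'
            · unfold IsMinEdge MoveMin
              rw [hu, hg]
              simp [childOf]
        | a' + 1 =>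
            rw [minPath_interior] at h
            obtain ⟨h1, h2⟩ := List.append_inj' h rfl
            have hξ : ξ (a' + 1, b + 1) = false := by
              cases hξ : ξ (a' + 1, b + 1)
              · rfl
              · rw [hξ] at h2; simp at h2
            rw [hξ] at h1
            simp only [Bool.not_false, predV_true, Nat.add_sub_cancel] at h1
            rcases Nat.lt_succ_iff_lt_or_eq.mp hi with hi' | rfl
            · exact ih (by rw [h1, hu]) i hi'
            · unfold IsMinEdge MoveMin
              rw [hu, hg]
              simp [childOf, hξ]

lemma pref_max_all {γ : ℕ → Bool} : ∀ {N : ℕ}, pref γ N = maxPath ξ (vertexAt γ N) →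
    ∀ i < N, IsMaxEdge ξ γ i := by
  intro N
  induction N with
  | zero => intro _ i hi; omega
  | succ N ih =>
      intro h i hi
      rw [pref_succ, vertexAt_succ] at h
      rcases hu : vertexAt γ N with ⟨a, b⟩
      rw [hu] at h
      cases hg : γ N <;> rw [hg] at h <;>
        simp only [childOf, Bool.false_eq_true, if_false, reduceIte] at h
      · match b with
        | 0 =>
            rw [maxPath_x0] at h
            obtain ⟨h1, _⟩ := List.append_inj' h rfl
            rcases Nat.lt_succ_iff_lt_or_eq.mp hi with hi' | rfl
            · exact ih (by rw [h1, hu]) i hi'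
            · unfold IsMaxEdge MoveMax
              rw [hu, hg]
              simp [childOf]
        | b' + 1 =>
            rw [maxPath_interior] at h
            obtain ⟨h1, h2⟩ := List.append_inj' h rfl
            have hξ : ξ (a + 1, b' + 1) = false := by
              cases hξ : ξ (a + 1, b' + 1)
              · rfl
              · rw [hξ] at h2; simp at h2
            rw [hξ] at h1
            simp only [predV_false, Nat.add_sub_cancel] at h1
            rcases Nat.lt_succ_iff_lt_or_eq.mp hi with hi' | rfl
            · exact ih (by rw [h1, hu]) i hi'
            · unfold IsMaxEdge MoveMax
              rw [hu, hg]
              simp [childOf, hξ]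
      · match a with
        | 0 =>
            rw [maxPath_0y] at h
            obtain ⟨h1, _⟩ := List.append_inj' h rfl
            rcases Nat.lt_succ_iff_lt_or_eq.mp hi with hi' | rfl
            · exact ih (by rw [h1, hu]) i hi'
            · unfold IsMaxEdge MoveMax
              rw [hu, hg]
              simp [childOf]
        | a' + 1 =>
            rw [maxPath_interior] at h
            obtain ⟨h1, h2⟩ := List.append_inj' h rfl
            have hξ : ξ (a' + 1, b + 1) = true := by
              cases hξ : ξ (a' + 1, b + 1)
              · rw [hξ] at h2; simp at h2
              · rfl
            rw [hξ] at h1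
            simp only [predV_true, Nat.add_sub_cancel] at h1
            rcases Nat.lt_succ_iff_lt_or_eq.mp hi with hi' | rfl
            · exact ih (by rw [h1, hu]) i hi'
            · unfold IsMaxEdge MoveMax
              rw [hu, hg]
              simp [childOf, hξ]

/-! ### segList has no duplicates -/

lemma nodup_segList : ∀ (n : ℕ) (p : ℕ × ℕ), p.1 + p.2 = n → (segList ξ p).Nodup := by
  intro n
  induction n using Nat.strong_induction_on with
  | _ n ih =>
    rintro ⟨x, y⟩ hn
    simp only at hn
    have hinj : ∀ b : Bool, Function.Injective (fun w : List Bool => w ++ [b]) := by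
      intro b w1 w2 h
      simpa using h
    match x, y with
    | 0, 0 => rw [segList_zero]; simp
    | x + 1, 0 =>
        rw [segList_x0]
        exact (ih (x + 0) (by omega) (x, 0) rfl).map (hinj false)
    | 0, y + 1 =>
        rw [segList_0y]
        exact (ih (0 + y) (by omega) (0, y) rfl).map (hinj true)
    | x + 1, y + 1 =>
        rw [segList_interior]
        apply List.Nodup.append
        · refine List.Nodup.map (hinj _) ?_
          rcases hb : !ξ (x + 1, y + 1) with _ | _
          · exact ih (x + (y + 1)) (by omega) _ (by simp)
          · exact ih ((x + 1) + y) (by omega) _ (by simp)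
        · refine List.Nodup.map (hinj _) ?_
          rcases hb : ξ (x + 1, y + 1) with _ | _
          · exact ih (x + (y + 1)) (by omega) _ (by simp)
          · exact ih ((x + 1) + y) (by omega) _ (by simp)
        · intro w h1 h2
          obtain ⟨w1, _, rfl⟩ := List.mem_map.mp h1
          obtain ⟨w2, _, heq⟩ := List.mem_map.mp h2
          have := congrArg List.getLast? heq
          simp at this

lemma nodup_segList' (p : ℕ × ℕ) : (segList ξ p).Nodup := nodup_segList (p.1 + p.2) p rfl

lemma segList_getD_inj {p : ℕ × ℕ} {s t : ℕ} (hs : s < (segList ξ p).length)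
    (ht : t < (segList ξ p).length) (h : (segList ξ p).getD s [] = (segList ξ p).getD t []) :
    s = t := by
  rw [List.getD_eq_getElem _ _ hs, List.getD_eq_getElem _ _ ht] at h
  exact (List.Nodup.getElem_inj_iff (nodup_segList' p)).mp h

end Stmt8
namespace Stmt8

open Classical

variable {ξ : ℕ × ℕ → Bool}

lemma concat_last_eq {w1 w2 : List Bool} {b1 b2 : Bool} (h : w1 ++ [b1] = w2 ++ [b2]) :
    w1 = w2 ∧ b1 = b2 := by
  obtain ⟨h1, h2⟩ := List.append_inj' h rfl
  exact ⟨h1, by simpa using h2⟩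

lemma pref_eq_of_getD {γ' : ℕ → Bool} {L : List Bool} {N : ℕ} (hL : L.length = N)
    (h : ∀ idx < N, γ' idx = L.getD idx false) : pref γ' N = L := by
  apply List.ext_getElem (by simp [hL])
  intro i h1 h2
  simp only [pref, List.getElem_map, List.getElem_range]
  rw [h i (by simpa using h1), List.getD_eq_getElem _ _ (by omega)]

lemma adicT_spec (γ : ℕ → Bool) (h : ∃ i, ¬ IsMaxEdge ξ γ i) :
    adicT ξ γ = fun n =>
      if n < Nat.find h then
        (minPath ξ (predV (vertexAt γ (Nat.find h + 1))
          (ξ (vertexAt γ (Nat.find h + 1))))).getD n false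
      else if n = Nat.find h then ξ (vertexAt γ (Nat.find h + 1)) else γ n := by
  simp only [adicT, dif_pos h, predV]

lemma adicTInv_spec (γ : ℕ → Bool) (h : ∃ i, ¬ IsMinEdge ξ γ i) :
    adicTInv ξ γ = fun n =>
      if n < Nat.find h then
        (maxPath ξ (predV (vertexAt γ (Nat.find h + 1))
          (!ξ (vertexAt γ (Nat.find h + 1))))).getD n false
      else if n = Nat.find h then !ξ (vertexAt γ (Nat.find h + 1)) else γ n := by
  simp only [adicTInv, dif_pos h, predV]
  cases hb : ξ (vertexAt γ (Nat.find h + 1)) <;> simp [hb]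

/-- The key successor lemma: if the length-`N` prefix of `γ` sits at position `s`
in the ordered list of paths and `s+1` is still a valid position, then `adicT`
advances the prefix to position `s+1` and leaves everything above level `N` alone. -/
lemma succ_step : ∀ (N : ℕ) (γ : ℕ → Bool) (s : ℕ),
    pref γ N = (segList ξ (vertexAt γ N)).getD s [] →
    s + 1 < (segList ξ (vertexAt γ N)).length →
    pref (adicT ξ γ) N = (segList ξ (vertexAt γ N)).getD (s + 1) [] ∧
      ∀ idx, N ≤ idx → adicT ξ γ idx = γ idx := by
  intro N
  induction N with
  | zero =>
      intro γ s _ hs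
      rw [vertexAt_zero, segList_zero] at hs
      simp at hs
  | succ N ih =>
      intro γ s hpre hs
      rcases hv : vertexAt γ (N + 1) with ⟨x, y⟩
      have hsum : x + y = N + 1 := by
        have := vertexAt_sum γ (N + 1); rw [hv] at this; simpa using this
      match x, y with
      | x, 0 =>
          exfalso
          rw [hv, length_segList' (x, 0)] at hs
          simp at hs
      | 0, y + 1 =>
          exfalso
          rw [hv, length_segList' (0, y + 1)] at hs
          simp [Nat.choose_self] at hs
      | x + 1, y + 1 =>
        have hvu : childOf (vertexAt γ N) (γ N) = (x + 1, y + 1) := by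
          rw [← vertexAt_succ, hv]
        have hum : predV (x + 1, y + 1) (γ N) = vertexAt γ N := by
          rw [← hvu, predV_childOf]
        rw [hv] at hpre hs
        rw [segList_interior] at hpre hs ⊢
        set b := ξ (x + 1, y + 1) with hbdef
        set Lm := segList ξ (predV (x + 1, y + 1) (!b)) with hLm
        set LM := segList ξ (predV (x + 1, y + 1) b) with hLM
        simp only [List.length_append, List.length_map] at hs
        rw [pref_succ] at hpre
        by_cases hgb : γ N = b
        · -- second half: the prefix ends with the larger letter
          have hsge : Lm.length ≤ s := by
            by_contra hcon
            push_neg at hcon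
            rw [List.getD_append _ _ _ _ (by simpa using hcon),
              getD_map_concat hcon] at hpre
            obtain ⟨_, hlast⟩ := concat_last_eq hpre
            rw [hgb] at hlast
            simp at hlast
          have hs2 : s - Lm.length + 1 < LM.length := by omega
          rw [List.getD_append_right _ _ _ _ (by simpa using hsge)] at hpre
          simp only [List.length_map] at hpre
          rw [getD_map_concat (by omega)] at hpre
          obtain ⟨hpre', _⟩ := concat_last_eq hpre
          rw [← hgb] at hLM
          rw [hum] at hLM
          obtain ⟨ih1, ih2⟩ := ih γ (s - Lm.length) (by rw [← hLM]; exact hpre')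
            (by rw [← hLM]; omega)
          constructor
          · rw [pref_succ, ih1, ih2 N le_rfl]
            rw [List.getD_append_right _ _ _ _ (by simp only [List.length_map]; omega)]
            simp only [List.length_map]
            rw [show s + 1 - Lm.length = s - Lm.length + 1 by omega,
              getD_map_concat (by omega), ← hLM, hgb]
          · intro idx hidx
            exact ih2 idx (by omega)
        · -- first half: the prefix ends with the smaller letter
          have hgb' : γ N = !b := by
            cases hγN : γ N <;> cases hbv : b <;> simp_all
          have hslt : s < Lm.length := by
            by_contra hcon
            push_neg at hcon
            rw [List.getD_append_right _ _ _ _ (by simpa using hcon)] at hpre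
            simp only [List.length_map] at hpre
            rw [getD_map_concat (by omega)] at hpre
            obtain ⟨_, hlast⟩ := concat_last_eq hpre
            rw [hgb'] at hlast
            simp at hlast
          rw [List.getD_append _ _ _ _ (by simpa using hslt),
            getD_map_concat hslt] at hpre
          obtain ⟨hpre', _⟩ := concat_last_eq hpre
          have hLmu : Lm = segList ξ (vertexAt γ N) := by
            rw [hLm, ← hgb', hum]
          rcases lt_or_eq_of_le (Nat.succ_le_of_lt hslt) with hlt | heq
          · -- still inside the first half
            obtain ⟨ih1, ih2⟩ := ih γ s (by rw [← hLmu]; exact hpre')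
              (by rw [← hLmu]; omega)
            constructor
            · rw [pref_succ, ih1, ih2 N le_rfl]
              rw [List.getD_append _ _ _ _ (by simp only [List.length_map]; omega),
                getD_map_concat (by omega), ← hLmu, hgb']
            · intro idx hidx
              exact ih2 idx (by omega)
          · -- crossing: prefix is the maximal path of the first half
            have hpmax : pref γ N = maxPath ξ (vertexAt γ N) := by
              rw [hpre', show s = Lm.length - 1 by omega, hLmu, segList_getD_last']
            have hallmax : ∀ i < N, IsMaxEdge ξ γ i := pref_max_all hpmax
            have hnot : ¬ IsMaxEdge ξ γ N := by
              unfold IsMaxEdge MoveMax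
              rw [hvu, hgb']
              simp only
              push_neg
              refine ⟨by omega, by omega, ?_⟩
              rw [← hbdef]
              cases b <;> simp
            have hex : ∃ i, ¬ IsMaxEdge ξ γ i := ⟨N, hnot⟩
            have hfind : Nat.find hex = N :=
              Nat.find_eq_iff hex |>.mpr ⟨hnot, fun i hi => not_not_intro (hallmax i hi)⟩
            have hspec := adicT_spec γ hex
            rw [hfind, hv, ← hbdef] at hspec
            have hlenmin : (minPath ξ (predV (x + 1, y + 1) b)).length = N := by
              have := (minPath_counts (ξ := ξ) (predV (x + 1, y + 1) b)).2.2
              rw [this]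
              cases b <;> simp [predV] <;> omega
            constructor
            · rw [pref_succ]
              have h1 : pref (adicT ξ γ) N = minPath ξ (predV (x + 1, y + 1) b) := by
                apply pref_eq_of_getD hlenmin
                intro idx hidx
                rw [hspec]
                simp [hidx]
              have h2 : adicT ξ γ N = b := by
                rw [hspec]
                simp
              rw [h1, h2]
              rw [List.getD_append_right _ _ _ _ (by simp only [List.length_map]; omega)]
              simp only [List.length_map]
              rw [show s + 1 - Lm.length = 0 by omega, getD_map_concat (by
                rw [hLM]; exact segList_length_pos _), hLM, segList_getD_zero']
            · intro idx hidx
              rw [hspec]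
              simp only
              rw [if_neg (by omega), if_neg (by omega)]

end Stmt8
namespace Stmt8

open Classical

variable {ξ : ℕ × ℕ → Bool}

/-- The mirror predecessor lemma for `adicTInv`. -/
lemma pred_step : ∀ (N : ℕ) (γ : ℕ → Bool) (s : ℕ),
    pref γ N = (segList ξ (vertexAt γ N)).getD (s + 1) [] →
    s + 1 < (segList ξ (vertexAt γ N)).length →
    pref (adicTInv ξ γ) N = (segList ξ (vertexAt γ N)).getD s [] ∧
      ∀ idx, N ≤ idx → adicTInv ξ γ idx = γ idx := by
  intro N
  induction N with
  | zero =>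
      intro γ s _ hs
      rw [vertexAt_zero, segList_zero] at hs
      simp at hs
  | succ N ih =>
      intro γ s hpre hs
      rcases hv : vertexAt γ (N + 1) with ⟨x, y⟩
      have hsum : x + y = N + 1 := by
        have := vertexAt_sum γ (N + 1); rw [hv] at this; simpa using this
      match x, y with
      | x, 0 =>
          exfalso
          rw [hv, length_segList' (x, 0)] at hs
          simp at hs
      | 0, y + 1 =>
          exfalso
          rw [hv, length_segList' (0, y + 1)] at hs
          simp [Nat.choose_self] at hs
      | x + 1, y + 1 =>
        have hvu : childOf (vertexAt γ N) (γ N) = (x + 1, y + 1) := by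
          rw [← vertexAt_succ, hv]
        have hum : predV (x + 1, y + 1) (γ N) = vertexAt γ N := by
          rw [← hvu, predV_childOf]
        rw [hv] at hpre hs
        rw [segList_interior] at hpre hs ⊢
        set b := ξ (x + 1, y + 1) with hbdef
        set Lm := segList ξ (predV (x + 1, y + 1) (!b)) with hLm
        set LM := segList ξ (predV (x + 1, y + 1) b) with hLM
        simp only [List.length_append, List.length_map] at hs
        rw [pref_succ] at hpre
        by_cases hgb : γ N = b
        · -- the prefix lies in the second (larger) half
          have hsge : Lm.length ≤ s + 1 := by
            by_contra hcon
            push_neg at hcon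
            rw [List.getD_append _ _ _ _ (by simpa using hcon),
              getD_map_concat hcon] at hpre
            obtain ⟨_, hlast⟩ := concat_last_eq hpre
            rw [hgb] at hlast
            simp at hlast
          rw [List.getD_append_right _ _ _ _ (by simpa using hsge)] at hpre
          simp only [List.length_map] at hpre
          rw [getD_map_concat (by omega)] at hpre
          obtain ⟨hpre', _⟩ := concat_last_eq hpre
          rw [← hgb] at hLM
          rw [hum] at hLM
          rcases Nat.lt_or_ge s Lm.length with hcross | hstay
          · -- crossing down: the prefix is the minimal element of the second half
            have hsl : s + 1 = Lm.length := by omega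
            have hpmin : pref γ N = minPath ξ (vertexAt γ N) := by
              rw [hpre', show s + 1 - Lm.length = 0 by omega, hLM, segList_getD_zero']
            have hallmin : ∀ i < N, IsMinEdge ξ γ i := pref_min_all hpmin
            have hnot : ¬ IsMinEdge ξ γ N := by
              unfold IsMinEdge MoveMin
              rw [hvu, hgb]
              simp only
              push_neg
              refine ⟨by omega, by omega, ?_⟩
              rw [← hbdef]
              cases b <;> simp
            have hex : ∃ i, ¬ IsMinEdge ξ γ i := ⟨N, hnot⟩
            have hfind : Nat.find hex = N :=
              Nat.find_eq_iff hex |>.mpr ⟨hnot, fun i hi => not_not_intro (hallmin i hi)⟩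
            have hspec := adicTInv_spec γ hex
            rw [hfind, hv, ← hbdef] at hspec
            have hlenmax : (maxPath ξ (predV (x + 1, y + 1) (!b))).length = N := by
              have := (maxPath_counts (ξ := ξ) (predV (x + 1, y + 1) (!b))).2.2
              rw [this]
              cases b <;> simp [predV] <;> omega
            constructor
            · rw [pref_succ]
              have h1 : pref (adicTInv ξ γ) N = maxPath ξ (predV (x + 1, y + 1) (!b)) := by
                apply pref_eq_of_getD hlenmax
                intro idx hidx
                rw [hspec]
                simp [hidx]
              have h2 : adicTInv ξ γ N = !b := by
                rw [hspec]
                simp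
              rw [h1, h2]
              have hLmpos : 0 < Lm.length := by rw [hLm]; exact segList_length_pos _
              rw [List.getD_append _ _ _ _ (by simp only [List.length_map]; omega),
                getD_map_concat (by omega)]
              rw [show s = Lm.length - 1 by omega, hLm, segList_getD_last']
            · intro idx hidx
              rw [hspec]
              simp only
              rw [if_neg (by omega), if_neg (by omega)]
          · -- staying inside the second half
            have hstep : s + 1 - Lm.length = (s - Lm.length) + 1 := by omega
            rw [hstep] at hpre'
            obtain ⟨ih1, ih2⟩ := ih γ (s - Lm.length) (by rw [← hLM]; exact hpre')
              (by rw [← hLM]; omega)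
            constructor
            · rw [pref_succ, ih1, ih2 N le_rfl]
              rw [List.getD_append_right _ _ _ _ (by simp only [List.length_map]; omega)]
              simp only [List.length_map]
              rw [getD_map_concat (by omega), ← hLM, hgb]
            · intro idx hidx
              exact ih2 idx (by omega)
        · -- the prefix lies in the first (smaller) half
          have hgb' : γ N = !b := by
            cases hγN : γ N <;> cases hbv : b <;> simp_all
          have hslt : s + 1 < Lm.length := by
            by_contra hcon
            push_neg at hcon
            rw [List.getD_append_right _ _ _ _ (by simpa using hcon)] at hpre
            simp only [List.length_map] at hpre
            rw [getD_map_concat (by omega)] at hpre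
            obtain ⟨_, hlast⟩ := concat_last_eq hpre
            rw [hgb'] at hlast
            simp at hlast
          rw [List.getD_append _ _ _ _ (by simpa using hslt),
            getD_map_concat (by omega)] at hpre
          obtain ⟨hpre', _⟩ := concat_last_eq hpre
          have hLmu : Lm = segList ξ (vertexAt γ N) := by
            rw [hLm, ← hgb', hum]
          obtain ⟨ih1, ih2⟩ := ih γ s (by rw [← hLmu]; exact hpre')
            (by rw [← hLmu]; omega)
          constructor
          · rw [pref_succ, ih1, ih2 N le_rfl]
            rw [List.getD_append _ _ _ _ (by simp only [List.length_map]; omega),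
              getD_map_concat (by omega), ← hLmu, hgb']
          · intro idx hidx
            exact ih2 idx (by omega)

end Stmt8
namespace Stmt8

open Classical

variable {ξ : ℕ × ℕ → Bool}

lemma vertexAt_eq_of_pref_getD {γ' γ : ℕ → Bool} {N s : ℕ}
    (h : pref γ' N = (segList ξ (vertexAt γ N)).getD s [])
    (hs : s < (segList ξ (vertexAt γ N)).length) :
    vertexAt γ' N = vertexAt γ N := by
  obtain ⟨c1, c2, _⟩ := count_of_mem_segList' (getD_mem hs)
  rw [vertexAt_counts γ' N, h, c1, c2]

lemma iter_succ (γ : ℕ → Bool) (N : ℕ) :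
    ∀ (q s : ℕ), pref γ N = (segList ξ (vertexAt γ N)).getD s [] →
    s + q < (segList ξ (vertexAt γ N)).length →
    pref ((adicT ξ)^[q] γ) N = (segList ξ (vertexAt γ N)).getD (s + q) [] ∧
      ∀ idx, N ≤ idx → (adicT ξ)^[q] γ idx = γ idx := by
  intro q
  induction q with
  | zero => intro s h _; exact ⟨h, fun _ _ => rfl⟩
  | succ q ihq =>
      intro s h hs
      obtain ⟨ih1, ih2⟩ := ihq s h (by omega)
      have hvq : vertexAt ((adicT ξ)^[q] γ) N = vertexAt γ N :=
        vertexAt_eq_of_pref_getD ih1 (by omega)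
      obtain ⟨h1, h2⟩ := succ_step N ((adicT ξ)^[q] γ) (s + q)
        (by rw [hvq]; exact ih1) (by rw [hvq]; omega)
      rw [hvq] at h1
      refine ⟨by rw [Function.iterate_succ_apply', h1, Nat.add_assoc], ?_⟩
      intro idx hidx
      rw [Function.iterate_succ_apply', h2 idx hidx, ih2 idx hidx]


lemma iter_pred (γ : ℕ → Bool) (N : ℕ) :
    ∀ (q s : ℕ), pref γ N = (segList ξ (vertexAt γ N)).getD (s + q) [] →
    s + q < (segList ξ (vertexAt γ N)).length →
    pref ((adicTInv ξ)^[q] γ) N = (segList ξ (vertexAt γ N)).getD s [] ∧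
      ∀ idx, N ≤ idx → (adicTInv ξ)^[q] γ idx = γ idx := by
  intro q
  induction q generalizing γ with
  | zero => intro s h _; exact ⟨h, fun _ _ => rfl⟩
  | succ q ihq =>
      intro s h hs
      obtain ⟨h1, h2⟩ := pred_step (ξ := ξ) N γ (s + q) (by exact h) (by omega)
      have hvq : vertexAt (adicTInv ξ γ) N = vertexAt γ N :=
        vertexAt_eq_of_pref_getD h1 (by omega)
      obtain ⟨ih1, ih2⟩ := ihq (adicTInv ξ γ) s (by rw [hvq]; exact h1) (by rw [hvq]; omega)
      rw [hvq] at ih1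
      refine ⟨by rw [Function.iterate_succ_apply]; exact ih1, ?_⟩
      intro idx hidx
      rw [Function.iterate_succ_apply, ih2 idx hidx, h2 idx hidx]

lemma adicT_eventually (γ : ℕ → Bool) : ∃ M, ∀ idx, M ≤ idx → adicT ξ γ idx = γ idx := by
  by_cases h : ∃ i, ¬ IsMaxEdge ξ γ i
  · refine ⟨Nat.find h + 1, fun idx hidx => ?_⟩
    rw [adicT_spec γ h]
    simp only
    rw [if_neg (by omega), if_neg (by omega)]
  · refine ⟨0, fun idx _ => ?_⟩
    simp only [adicT, dif_neg h]

lemma iterT_eventually (γ : ℕ → Bool) (q : ℕ) :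
    ∃ M, ∀ idx, M ≤ idx → (adicT ξ)^[q] γ idx = γ idx := by
  induction q with
  | zero => exact ⟨0, fun _ _ => rfl⟩
  | succ q ih =>
      obtain ⟨M1, h1⟩ := ih
      obtain ⟨M2, h2⟩ := adicT_eventually (ξ := ξ) ((adicT ξ)^[q] γ)
      refine ⟨max M1 M2, fun idx hidx => ?_⟩
      rw [Function.iterate_succ_apply', h2 idx (by omega), h1 idx (by omega)]

lemma no_period (γ : ℕ → Bool) (p : ℕ) (hp : 1 ≤ p)
    (hq : ∀ q, ∃ i, ¬ IsMaxEdge ξ ((adicT ξ)^[q] γ) i) :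
    (adicT ξ)^[p] γ ≠ γ := by
  intro hper
  set f : ℕ → ℕ := fun q => Nat.find (hq q) with hf
  set M : ℕ := (Finset.range p).sup f + 1 with hM
  have hfM : ∀ q < p, f q < M := by
    intro q hqp
    have : f q ≤ (Finset.range p).sup f := Finset.le_sup (Finset.mem_range.mpr hqp)
    omega
  set L := segList ξ (vertexAt γ M) with hL
  obtain ⟨s0, hs0lt0, hs0⟩ := List.mem_iff_getElem.mp (pref_mem (ξ := ξ) γ M)
  have hs0lt : s0 < L.length := by rw [hL]; exact hs0lt0
  have hs0' : pref γ M = L.getD s0 [] := by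
    rw [hL, List.getD_eq_getElem _ _ hs0lt0, hs0]
  have claim : ∀ q, q ≤ p → pref ((adicT ξ)^[q] γ) M = L.getD (s0 + q) [] ∧
      s0 + q < L.length := by
    intro q
    induction q with
    | zero => intro _; exact ⟨by simpa using hs0', by omega⟩
    | succ q ihq =>
        intro hqp
        obtain ⟨c1, c2⟩ := ihq (by omega)
        have hvq : vertexAt ((adicT ξ)^[q] γ) M = vertexAt γ M :=
          vertexAt_eq_of_pref_getD c1 c2
        have hne : s0 + q ≠ L.length - 1 := by
          intro heq
          have hmax : pref ((adicT ξ)^[q] γ) M = maxPath ξ (vertexAt ((adicT ξ)^[q] γ) M) := by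
            rw [hvq, c1, heq, hL, segList_getD_last']
          have hall := pref_max_all hmax
          exact Nat.find_spec (hq q) (hall (f q) (hfM q (by omega)))
        have hlt : s0 + q + 1 < L.length := by omega
        obtain ⟨h1, h2⟩ := succ_step M ((adicT ξ)^[q] γ) (s0 + q)
          (by rw [hvq]; exact c1) (by rw [hvq]; exact hlt)
        rw [hvq] at h1
        exact ⟨by rw [Function.iterate_succ_apply', h1, hL, Nat.add_assoc], hlt⟩
  obtain ⟨cp, cplt⟩ := claim p le_rfl
  rw [hper, hs0'] at cp
  rw [hL] at cp cplt
  have := segList_getD_inj (p := vertexAt γ M) hs0lt0 cplt cp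
  omega

lemma exists_nonmax_iter {γ w : ℕ → Bool} (hγ : γ ∉ XPrime ξ)
    (hw : ∃ Nw, ∀ idx, Nw ≤ idx → w idx = γ idx) (q : ℕ) :
    ∃ i, ¬ IsMaxEdge ξ ((adicT ξ)^[q] w) i := by
  by_contra hcon
  push_neg at hcon
  apply hγ
  obtain ⟨M1, h1⟩ := iterT_eventually (ξ := ξ) w q
  obtain ⟨Nw, h2⟩ := hw
  refine ⟨(adicT ξ)^[q] w, Or.inr (fun i => hcon i), max M1 Nw, ?_⟩
  intro n hn
  rw [h1 n (by omega), h2 n (by omega)]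

end Stmt8
namespace Stmt8

open Classical

variable {ξ : ℕ × ℕ → Bool}

lemma choose_succ_left {n k : ℕ} (hk : 0 < k) :
    (n + 1).choose k = n.choose (k - 1) + n.choose k := by
  cases k with
  | zero => omega
  | succ k' => simpa using Nat.choose_succ_succ n k'

lemma moveMax_iff {i j : ℕ} (hi : 0 < i) (hj : 0 < j) (c : Bool) :
    MoveMax ξ (i, j) c ↔ ξ (childOf (i, j) c) = c := by
  unfold MoveMax
  constructor
  · rintro (h | h | h)
    · exfalso; revert h; cases c <;> simp [childOf] <;> omega
    · exfalso; revert h; cases c <;> simp [childOf] <;> omega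
    · exact h.symm
  · intro h
    exact Or.inr (Or.inr h.symm)

lemma moveMin_iff {i j : ℕ} (hi : 0 < i) (hj : 0 < j) (c : Bool) :
    MoveMin ξ (i, j) c ↔ ξ (childOf (i, j) c) = !c := by
  unfold MoveMin
  constructor
  · rintro (h | h | h)
    · exfalso; revert h; cases c <;> simp [childOf] <;> omega
    · exfalso; revert h; cases c <;> simp [childOf] <;> omega
    · cases hx : ξ (childOf (i, j) c) <;> cases hc : c <;> simp_all
  · intro h
    refine Or.inr (Or.inr ?_)
    cases hx : ξ (childOf (i, j) c) <;> cases hc : c <;> simp_all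

lemma block_in_child (i j : ℕ) (hi : 0 < i) (hj : 0 < j) (c : Bool) :
    (if ξ (childOf (i, j) c) = c
        then (segList ξ (predV (childOf (i, j) c) (!c))).length else 0)
        + (segList ξ (i, j)).length ≤ (segList ξ (childOf (i, j) c)).length ∧
    ∀ d < (segList ξ (i, j)).length,
      (segList ξ (childOf (i, j) c)).getD
        ((if ξ (childOf (i, j) c) = c
          then (segList ξ (predV (childOf (i, j) c) (!c))).length else 0) + d) []
        = (segList ξ (i, j)).getD d [] ++ [c] := by
  obtain ⟨i', rfl⟩ : ∃ i', i = i' + 1 := ⟨i - 1, by omega⟩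
  obtain ⟨j', rfl⟩ : ∃ j', j = j' + 1 := ⟨j - 1, by omega⟩
  cases c
  · have hch : childOf (i' + 1, j' + 1) false = (i' + 1 + 1, j' + 1) := by simp [childOf]
    rw [hch]
    rw [segList_interior (i' + 1) j']
    have hpv : predV (i' + 1 + 1, j' + 1) false = (i' + 1, j' + 1) := by simp
    cases hw : ξ (i' + 1 + 1, j' + 1)
    · -- block is the second half
      simp only [hw, Bool.not_false, eq_self_iff_true, if_true, Bool.true_eq_false, Bool.false_eq_true, if_false, List.length_append, List.length_map, hpv]
      constructor
      · omega
      · intro d hd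
        rw [List.getD_append_right _ _ _ _ (by simp only [List.length_map]; omega)]
        simp only [List.length_map]
        rw [show (segList ξ (predV (i' + 1 + 1, j' + 1) true)).length + d -
          (segList ξ (predV (i' + 1 + 1, j' + 1) true)).length = d by omega,
          getD_map_concat hd]
    · -- block is the first half
      simp only [hw, Bool.not_true, eq_self_iff_true, if_true, Bool.true_eq_false, Bool.false_eq_true, if_false, List.length_append, List.length_map,
        hpv, Nat.zero_add]
      constructor
      · omega
      · intro d hd
        rw [List.getD_append _ _ _ _ (by simp only [List.length_map]; omega),
          getD_map_concat (by omega)]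
  · have hch : childOf (i' + 1, j' + 1) true = (i' + 1, j' + 1 + 1) := by simp [childOf]
    rw [hch]
    rw [segList_interior i' (j' + 1)]
    have hpv : predV (i' + 1, j' + 1 + 1) true = (i' + 1, j' + 1) := by simp
    cases hw : ξ (i' + 1, j' + 1 + 1)
    · -- ξ w = false ≠ c = true : block is the first half (letter !false = true)
      simp only [hw, Bool.not_false, eq_self_iff_true, if_true, Bool.true_eq_false, Bool.false_eq_true, if_false, List.length_append, List.length_map,
        hpv, Nat.zero_add]
      constructor
      · omega
      · intro d hd
        rw [List.getD_append _ _ _ _ (by simp only [List.length_map]; omega),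
          getD_map_concat (by omega)]
    · -- ξ w = true = c : block is second half
      simp only [hw, Bool.not_true, eq_self_iff_true, if_true, Bool.true_eq_false, Bool.false_eq_true, if_false, List.length_append, List.length_map, hpv]
      constructor
      · omega
      · intro d hd
        rw [List.getD_append_right _ _ _ _ (by simp only [List.length_map]; omega)]
        simp only [List.length_map]
        rw [show (segList ξ (predV (i' + 1, j' + 1 + 1) false)).length + d -
          (segList ξ (predV (i' + 1, j' + 1 + 1) false)).length = d by omega,
          getD_map_concat hd]

end Stmt8
namespace Stmt8

open Classical

variable {ξ : ℕ × ℕ → Bool}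

lemma kink_arith (i j : ℕ) (hi : 0 < i) (hj : 0 < j) (g : Bool) :
    (if ξ (childOf (i, j) g) = g
        then (segList ξ (predV (childOf (i, j) g) (!g))).length else 0)
      + kinkReturn ξ i j g
    = (segList ξ (childOf (i, j) g)).length
      + (if ξ (childOf (i, j) (!g)) = !g
          then (segList ξ (predV (childOf (i, j) (!g)) (!(!g)))).length else 0) := by
  have I1 : (i + j + 1).choose (j + 1) = (i + j).choose j + (i + j).choose (j + 1) :=
    Nat.choose_succ_succ _ _
  have I2 : (i + j + 1).choose j = (i + j).choose (j - 1) + (i + j).choose j :=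
    choose_succ_left hj
  have hchf : childOf (i, j) false = (i + 1, j) := by simp [childOf]
  have hcht : childOf (i, j) true = (i, j + 1) := by simp [childOf]
  have eMaxF : MoveMax ξ (i, j) false ↔ (ξ (i + 1, j) = false) := by
    rw [moveMax_iff hi hj, hchf]
  have eMinF : MoveMin ξ (i, j) false ↔ (ξ (i + 1, j) = true) := by
    rw [moveMin_iff hi hj, hchf]; simp
  have eMaxT : MoveMax ξ (i, j) true ↔ (ξ (i, j + 1) = true) := by
    rw [moveMax_iff hi hj, hcht]
  have eMinT : MoveMin ξ (i, j) true ↔ (ξ (i, j + 1) = false) := by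
    rw [moveMin_iff hi hj, hcht]; simp
  cases g <;>
    simp only [Bool.not_false, Bool.not_true, hchf, hcht] <;>
    [cases hA : ξ (i + 1, j) <;> cases hB : ξ (i, j + 1);
     cases hA : ξ (i, j + 1) <;> cases hB : ξ (i + 1, j)] <;>
    · simp only [kinkReturn, Bool.not_false, Bool.not_true, eMaxF, eMinF, eMaxT, eMinT,
        hA, hB, eq_self_iff_true, if_true, Bool.true_eq_false, Bool.false_eq_true, if_false,
        and_true, and_false, true_and, false_and, or_false, false_or, and_self, reduceIte,
        length_segList', predV_true, predV_false, or_self]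
      simp only [show i + 1 + (j - 1) = i + j from by omega,
        show i + 1 + j = i + j + 1 from by omega,
        show i - 1 + (j + 1) = i + j from by omega,
        show i + (j + 1) = i + j + 1 from by omega]
      omega

end Stmt8
namespace Stmt8

open Classical

variable {ξ : ℕ × ℕ → Bool}

lemma adicIter_coe (q : ℕ) (γ : ℕ → Bool) : adicIter ξ (q : ℤ) γ = (adicT ξ)^[q] γ := rfl

lemma adicIter_negSucc (a : ℕ) (γ : ℕ → Bool) :
    adicIter ξ (Int.negSucc a) γ = (adicTInv ξ)^[a + 1] γ := rfl

end Stmt8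

open Stmt8 Classical in
theorem stmt8 (ξ : ℕ × ℕ → Bool) (k : ℕ) (hk : 1 ≤ k)
    (γ : ℕ → Bool) (hγ : γ ∉ XPrime ξ)
    (i j : ℕ) (hi : 0 < i) (hj : 0 < j) (n : ℕ) (hn : n = i + j) (hkn : k ≤ n)
    (hv : vertexAt γ n = (i, j))
    (hv2 : vertexAt γ (n + 2) = (i + 1, j + 1))
    (hminedge : IsMinEdge ξ γ (n + 1)) :
    (∀ idx < n, adicIter ξ (kinkReturn ξ i j (γ n)) γ idx = γ idx) ∧
    (∀ (x z : ℕ → Bool) (m l : ℕ),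
      vertexAt x n = (i, j) → (∀ i' < n, IsMinEdge ξ x i') → (∀ idx, n ≤ idx → x idx = γ idx) →
      vertexAt z n = (i, j) → (∀ i' < n, IsMaxEdge ξ z i') → (∀ idx, n ≤ idx → z idx = γ idx) →
      adicIter ξ m x = γ → adicIter ξ l γ = z →
      ∀ t : ℤ, t.natAbs < min m l →
        omegaCode ξ k γ (t + kinkReturn ξ i j (γ n)) = omegaCode ξ k γ t) := by
  set g := γ n with hgdef
  -- basic structure of the two moves across the kink
  have h1 : vertexAt γ (n + 1) = childOf (i, j) g := by rw [vertexAt_succ, hv]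
  have h3 : childOf (childOf (i, j) g) (γ (n + 1)) = (i + 1, j + 1) := by
    rw [← h1, ← vertexAt_succ]
    exact hv2
  have hg1 : γ (n + 1) = !g := by
    rcases hgc : g with _ | _ <;> rcases hgg : γ (n + 1) with _ | _
    · exfalso; rw [hgc, hgg] at h3; simp [childOf, Prod.ext_iff] at h3
    · rfl
    · rfl
    · exfalso; rw [hgc, hgg] at h3; simp [childOf, Prod.ext_iff] at h3
  have hgval : g = ξ (i + 1, j + 1) := by
    have hmust := hminedge
    unfold IsMinEdge MoveMin at hmust
    rw [h1] at hmust
    rw [h3] at hmust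
    rcases hmust with h' | h' | h'
    · simp at h'
    · simp at h'
    · rw [hg1] at h'
      cases hb : ξ (i + 1, j + 1) <;> cases hgc : g <;> simp_all
  -- the column at level n+2 and its two (i,j)-blocks
  have hpA : predV (i + 1, j + 1) (!g) = childOf (i, j) g := by
    cases hgc : g <;> simp [childOf]
  have hpB : predV (i + 1, j + 1) g = childOf (i, j) (!g) := by
    cases hgc : g <;> simp [childOf]
  have hseg : segList ξ (i + 1, j + 1) =
      (segList ξ (childOf (i, j) g)).map (· ++ [!g]) ++
      (segList ξ (childOf (i, j) (!g))).map (· ++ [g]) := by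
    rw [segList_interior i j, ← hgval, hpA, hpB]
  obtain ⟨bA1, bA2⟩ := block_in_child (ξ := ξ) i j hi hj g
  obtain ⟨bB1, bB2⟩ := block_in_child (ξ := ξ) i j hi hj (!g)
  set C := (segList ξ (i, j)).length with hC
  set lenA := (segList ξ (childOf (i, j) g)).length with hlenA
  set lenB := (segList ξ (childOf (i, j) (!g))).length with hlenB
  set oA := (if ξ (childOf (i, j) g) = g
    then (segList ξ (predV (childOf (i, j) g) (!g))).length else 0) with hoA
  set oB := (if ξ (childOf (i, j) (!g)) = !g
    then (segList ξ (predV (childOf (i, j) (!g)) (!(!g)))).length else 0) with hoB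
  have hlencol : (segList ξ (i + 1, j + 1)).length = lenA + lenB := by
    rw [hseg]; simp [hlenA, hlenB]
  have colA : ∀ d < C, (segList ξ (i + 1, j + 1)).getD (oA + d) [] =
      (segList ξ (i, j)).getD d [] ++ [g] ++ [!g] := by
    intro d hd
    rw [hseg, List.getD_append _ _ _ _ (by simp only [List.length_map]; omega),
      getD_map_concat (by omega), bA2 d hd]
  have colB : ∀ d < C, (segList ξ (i + 1, j + 1)).getD (lenA + (oB + d)) [] =
      (segList ξ (i, j)).getD d [] ++ [!g] ++ [g] := by
    intro d hd
    rw [hseg, List.getD_append_right _ _ _ _ (by simp only [List.length_map]; omega)]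
    simp only [List.length_map]
    rw [show lenA + (oB + d) - lenA = oB + d by omega, getD_map_concat (by omega),
      bB2 d hd]
  -- position of γ's prefix
  have hmem := pref_mem (ξ := ξ) γ n
  rw [hv] at hmem
  obtain ⟨δ, hδlt, hδ⟩ := List.mem_iff_getElem.mp hmem
  have hδD : pref γ n = (segList ξ (i, j)).getD δ [] := by
    rw [List.getD_eq_getElem _ _ hδlt, hδ]
  have hδC : δ < C := hδlt
  have hcore_len : ∀ d < C, ((segList ξ (i, j)).getD d []).length = n := by
    intro d hd
    have := (count_of_mem_segList' (getD_mem (L := segList ξ (i, j)) hd)).2.2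
    simpa [← hn] using this
  have hprefN : pref γ (n + 2) = (segList ξ (i + 1, j + 1)).getD (oA + δ) [] := by
    rw [show n + 2 = (n + 1) + 1 by omega, pref_succ, pref_succ, hg1, ← hgdef,
      colA δ hδC, hδD]
  -- the return-time arithmetic
  set r := kinkReturn ξ i j g with hrdef
  have hr : oA + r = lenA + oB := kink_arith i j hi hj g
  have hrC : C ≤ r := by omega
  -- part 1
  have hiter1 : pref ((adicT ξ)^[r] γ) (n + 2) =
      (segList ξ (i + 1, j + 1)).getD (oA + δ + r) [] ∧
      ∀ idx, n + 2 ≤ idx → (adicT ξ)^[r] γ idx = γ idx := by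
    have := iter_succ γ (n + 2) r (oA + δ) (by rw [hv2]; exact hprefN)
      (by rw [hv2, hlencol]; omega)
    rw [hv2] at this
    exact this
  have hpart1pref : pref ((adicT ξ)^[r] γ) (n + 2) =
      (segList ξ (i, j)).getD δ [] ++ [!g] ++ [g] := by
    rw [hiter1.1, show oA + δ + r = lenA + (oB + δ) by omega, colB δ hδC]
  have hpart1 : ∀ idx < n, (adicT ξ)^[r] γ idx = γ idx := by
    intro idx hidx
    have e1 : (adicT ξ)^[r] γ idx =
        ((segList ξ (i, j)).getD δ [] ++ [!g] ++ [g]).getD idx false := by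
      rw [← hpart1pref, pref_getD _ (by omega)]
    have e2 : γ idx = ((segList ξ (i, j)).getD δ [] ++ [g] ++ [!g]).getD idx false := by
      rw [← colA δ hδC, ← hprefN, pref_getD _ (by omega)]
    rw [e1, e2]
    have hl := hcore_len δ hδC
    have hb1 : idx < ((segList ξ (i, j)).getD δ [] ++ [!g]).length := by
      simp only [List.length_append, List.length_cons, List.length_nil, hl]; omega
    have hb2 : idx < ((segList ξ (i, j)).getD δ [] ++ [g]).length := by
      simp only [List.length_append, List.length_cons, List.length_nil, hl]; omega
    have hb3 : idx < ((segList ξ (i, j)).getD δ []).length := by rw [hl]; omega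
    rw [List.getD_append _ _ _ _ hb1, List.getD_append _ _ _ _ hb2,
      List.getD_append _ _ _ _ hb3, List.getD_append _ _ _ _ hb3]
  constructor
  · intro idx hidx
    rw [show ((kinkReturn ξ i j (γ n) : ℕ) : ℤ) = ((r : ℕ) : ℤ) by rw [hrdef],
      adicIter_coe]
    exact hpart1 idx hidx
  -- part 2
  intro x z m l hx1 hx2 hx3 hz1 hz2 hz3 hmx hlz t ht
  -- x is at position oA, z at position oA + (C-1)
  have hxpref : pref x n = (segList ξ (i, j)).getD 0 [] := by
    have := all_min_pref (ξ := ξ) hx2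
    rw [hx1] at this
    rw [this, segList_getD_zero']
  have hxN : pref x (n + 2) = (segList ξ (i + 1, j + 1)).getD (oA + 0) [] := by
    rw [show n + 2 = (n + 1) + 1 by omega, pref_succ, pref_succ,
      hx3 (n + 1) (by omega), hx3 n le_rfl, hg1, ← hgdef,
      colA 0 (by omega), hxpref]
  have hzpref : pref z n = (segList ξ (i, j)).getD (C - 1) [] := by
    have := all_max_pref (ξ := ξ) hz2
    rw [hz1] at this
    rw [this, segList_getD_last']
  have hzN : pref z (n + 2) = (segList ξ (i + 1, j + 1)).getD (oA + (C - 1)) [] := by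
    rw [show n + 2 = (n + 1) + 1 by omega, pref_succ, pref_succ,
      hz3 (n + 1) (by omega), hz3 n le_rfl, hg1, ← hgdef,
      colA (C - 1) (by omega), hzpref]
  have hCpos : 0 < C := by omega
  -- T^[δ] x = γ
  have hvx2 : vertexAt x (n + 2) = (i + 1, j + 1) := by
    have := vertexAt_eq_of_pref_getD (γ' := x) (γ := γ) (N := n + 2) (s := oA + 0)
      (by rw [hv2]; exact hxN) (by rw [hv2, hlencol]; omega)
    rw [this, hv2]
  have hTx : (adicT ξ)^[δ] x = γ := by
    obtain ⟨xt1, xt2⟩ := iter_succ x (n + 2) δ (oA + 0)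
      (by rw [hvx2]; exact hxN) (by rw [hvx2, hlencol]; omega)
    rw [hvx2] at xt1
    funext idx
    rcases Nat.lt_or_ge idx (n + 2) with hc | hc
    · refine eq_of_pref_eq (N := n + 2) ?_ hc
      rw [xt1, show oA + 0 + δ = oA + δ by omega, hprefN]
    · rw [xt2 idx hc, hx3 idx (by omega)]
  -- T^[C-1-δ] γ = z
  have hTz : (adicT ξ)^[C - 1 - δ] γ = z := by
    obtain ⟨zt1, zt2⟩ := iter_succ γ (n + 2) (C - 1 - δ) (oA + δ)
      (by rw [hv2]; exact hprefN) (by rw [hv2, hlencol]; omega)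
    rw [hv2] at zt1
    funext idx
    rcases Nat.lt_or_ge idx (n + 2) with hc | hc
    · refine eq_of_pref_eq (N := n + 2) ?_ hc
      rw [zt1, hzN]
      congr 1
      omega
    · rw [zt2 idx hc, hz3 idx (by omega)]
  -- exact values of m and l
  have hγper : ∀ p : ℕ, 1 ≤ p → (adicT ξ)^[p] γ ≠ γ := fun p hp =>
    no_period γ p hp (exists_nonmax_iter hγ ⟨0, fun _ _ => rfl⟩)
  have hzper : ∀ p : ℕ, 1 ≤ p → (adicT ξ)^[p] z ≠ z := fun p hp =>
    no_period z p hp (exists_nonmax_iter hγ ⟨n, hz3⟩)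
  have hmx' : (adicT ξ)^[m] x = γ := by rw [← adicIter_coe]; exact hmx
  have hlz' : (adicT ξ)^[l] γ = z := by rw [← adicIter_coe]; exact hlz
  have hm : m = δ := by
    by_contra hne
    rcases Nat.lt_or_ge m δ with hlt | hge
    · apply hγper (δ - m) (by omega)
      calc (adicT ξ)^[δ - m] γ = (adicT ξ)^[δ - m] ((adicT ξ)^[m] x) := by rw [hmx']
        _ = (adicT ξ)^[δ - m + m] x := by rw [Function.iterate_add_apply]
        _ = γ := by rw [show δ - m + m = δ from by omega, hTx]
    · apply hγper (m - δ) (by omega)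
      calc (adicT ξ)^[m - δ] γ = (adicT ξ)^[m - δ] ((adicT ξ)^[δ] x) := by rw [hTx]
        _ = (adicT ξ)^[m - δ + δ] x := by rw [Function.iterate_add_apply]
        _ = γ := by rw [show m - δ + δ = m from by omega, hmx']
  have hl : l = C - 1 - δ := by
    by_contra hne
    rcases Nat.lt_or_ge l (C - 1 - δ) with hlt | hge
    · apply hzper (C - 1 - δ - l) (by omega)
      calc (adicT ξ)^[C - 1 - δ - l] z = (adicT ξ)^[C - 1 - δ - l] ((adicT ξ)^[l] γ) := by
            rw [hlz']
        _ = (adicT ξ)^[C - 1 - δ - l + l] γ := by rw [Function.iterate_add_apply]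
        _ = z := by rw [show C - 1 - δ - l + l = C - 1 - δ from by omega, hTz]
    · apply hzper (l - (C - 1 - δ)) (by omega)
      calc (adicT ξ)^[l - (C - 1 - δ)] z
          = (adicT ξ)^[l - (C - 1 - δ)] ((adicT ξ)^[C - 1 - δ] γ) := by rw [hTz]
        _ = (adicT ξ)^[l - (C - 1 - δ) + (C - 1 - δ)] γ := by rw [Function.iterate_add_apply]
        _ = z := by rw [show l - (C - 1 - δ) + (C - 1 - δ) = l from by omega, hlz']
  rw [hm, hl] at ht
  -- the k-coding helper
  have take_k : ∀ (γ' : ℕ → Bool) (d : ℕ), d < C → ∀ c1 c2 : Bool,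
      pref γ' (n + 2) = (segList ξ (i, j)).getD d [] ++ [c1] ++ [c2] →
      (List.range k).map γ' = ((segList ξ (i, j)).getD d []).take k := by
    intro γ' d hd c1 c2 hp
    have hlen := hcore_len d hd
    have e1 : (List.range k).map γ' = (pref γ' (n + 2)).take k := by
      unfold pref
      rw [← List.map_take, List.take_range, Nat.min_eq_left (by omega)]
    have hb1 : k ≤ ((segList ξ (i, j)).getD d [] ++ [c1]).length := by
      simp only [List.length_append, List.length_cons, List.length_nil, hlen]; omega
    have hb2 : k ≤ ((segList ξ (i, j)).getD d []).length := by rw [hlen]; omega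
    rw [e1, hp, List.take_append_of_le_length hb1, List.take_append_of_le_length hb2]
  -- conclude
  have hrcast : ((kinkReturn ξ i j (γ n) : ℕ) : ℤ) = ((r : ℕ) : ℤ) := by
    rw [hrdef]
  simp only [omegaCode, hrcast]
  rcases t with a | a
  · -- t = a ≥ 0
    have hta : a < min δ (C - 1 - δ) := by simpa using ht
    have hblk1 : pref ((adicT ξ)^[a] γ) (n + 2) =
        (segList ξ (i, j)).getD (δ + a) [] ++ [g] ++ [!g] := by
      obtain ⟨p1, _⟩ := iter_succ γ (n + 2) a (oA + δ)
        (by rw [hv2]; exact hprefN) (by rw [hv2, hlencol]; omega)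
      rw [hv2] at p1
      rw [p1, show oA + δ + a = oA + (δ + a) by omega, colA (δ + a) (by omega)]
    have hblk2 : pref ((adicT ξ)^[a + r] γ) (n + 2) =
        (segList ξ (i, j)).getD (δ + a) [] ++ [!g] ++ [g] := by
      obtain ⟨p1, _⟩ := iter_succ γ (n + 2) (a + r) (oA + δ)
        (by rw [hv2]; exact hprefN) (by rw [hv2, hlencol]; omega)
      rw [hv2] at p1
      rw [p1, show oA + δ + (a + r) = lenA + (oB + (δ + a)) by omega,
        colB (δ + a) (by omega)]
    simp only [Int.ofNat_eq_natCast]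
    have hc1 : ((a : ℕ) : ℤ) + ((r : ℕ) : ℤ) = ((a + r : ℕ) : ℤ) := by push_cast; ring
    rw [hc1, adicIter_coe, adicIter_coe]
    rw [take_k _ (δ + a) (by omega) _ _ hblk2, take_k _ (δ + a) (by omega) _ _ hblk1]
  · -- t = -(a+1)
    have hta : a + 1 < min δ (C - 1 - δ) := by simpa using ht
    have hblk1 : pref ((adicTInv ξ)^[a + 1] γ) (n + 2) =
        (segList ξ (i, j)).getD (δ - (a + 1)) [] ++ [g] ++ [!g] := by
      obtain ⟨p1, _⟩ := iter_pred γ (n + 2) (a + 1) (oA + (δ - (a + 1)))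
        (by rw [hv2, show oA + (δ - (a + 1)) + (a + 1) = oA + δ by omega]; exact hprefN)
        (by rw [hv2, hlencol]; omega)
      rw [hv2] at p1
      rw [p1, colA (δ - (a + 1)) (by omega)]
    have hblk2 : pref ((adicT ξ)^[r - (a + 1)] γ) (n + 2) =
        (segList ξ (i, j)).getD (δ - (a + 1)) [] ++ [!g] ++ [g] := by
      obtain ⟨p1, _⟩ := iter_succ γ (n + 2) (r - (a + 1)) (oA + δ)
        (by rw [hv2]; exact hprefN) (by rw [hv2, hlencol]; omega)
      rw [hv2] at p1
      rw [p1, show oA + δ + (r - (a + 1)) = lenA + (oB + (δ - (a + 1))) by omega,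
        colB (δ - (a + 1)) (by omega)]
    have hc1 : (Int.negSucc a) + ((r : ℕ) : ℤ) = ((r - (a + 1) : ℕ) : ℤ) := by
      rw [Int.negSucc_eq]
      omega
    rw [hc1, adicIter_coe, adicIter_negSucc]
    rw [take_k _ (δ - (a + 1)) (by omega) _ _ hblk2,
      take_k _ (δ - (a + 1)) (by omega) _ _ hblk1]
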